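/- Suppose n > 3t and each process in a set Π of n processes sends at most one value in {0,1} per round, except for a faulty subset F of size at most t whose members may send both values. Then in any fixed round there is at most one binary value b such that at least n - t distinct processes sent b. -/
import Mathlib


theorem at_most_one_quorum_value {α : Type*} [DecidableEq α] (P F : Finset α) (n t : ℕ)
    (sent : α → Bool → Prop)
    (hn : P.card = n) (ht : 3 * t < n)
    (hF : F ⊆ P) (hFcard : F.card ≤ t)
    (hnonfaulty : ∀ p ∈ P, p ∉ F → ∀ b₀ b₁ : Bool, sent p b₀ → sent p b₁ → b₀ = b₁) :
    ∀ b₀ b₁ : Bool,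
      (∃ S ⊆ P, n - t ≤ S.card ∧ ∀ p ∈ S, sent p b₀) →
      (∃ S ⊆ P, n - t ≤ S.card ∧ ∀ p ∈ S, sent p b₁) →
      b₀ = b₁ := by
  rintro b₀ b₁ ⟨S₀, hS₀, hc₀, hs₀⟩ ⟨S₁, hS₁, hc₁, hs₁⟩
  have hunion : (S₀ ∪ S₁).card ≤ n := hn ▸ Finset.card_le_card (Finset.union_subset hS₀ hS₁)
  have hinter : t < (S₀ ∩ S₁).card := by
    have := Finset.card_union_add_card_inter S₀ S₁
    omega
  have hns : ¬ (S₀ ∩ S₁) ⊆ F := fun h => absurd (Finset.card_le_card h) (by omega)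
  obtain ⟨p, hp, hpF⟩ := Finset.not_subset.mp hns
  have hp₀ := Finset.mem_of_mem_inter_left hp
  have hp₁ := Finset.mem_of_mem_inter_right hp
  exact hnonfaulty p (hS₀ hp₀) hpF b₀ b₁ (hs₀ p hp₀) (hs₁ p hp₁)
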